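/- Let v be a non-decreasing submodular function on a finite set M, and let X = {x_1, …, x_k} and Y = {y_1, …, y_k} be k-element subsets of M. If for every r ∈ [k−1] the marginal values satisfy v(x_r | {x_1,…,x_{r−1}}) ≥ v(y_{r+1} | {x_1,…,x_{r−1}}), then v(X) ≥ (1/2)·v(Y \ {y_1}). -/
import Mathlib


/-- The set `{x_1, …, x_{r−1}}` of goods indexed strictly below `r`. -/
def prefixSet {G : Type*} [DecidableEq G] {k : ℕ} (x : Fin k → G) (r : Fin k) : Finset G :=
  (Finset.univ.filter fun j => j < r).image x

lemma union_bound_aux {G : Type*} [DecidableEq G] (v : Finset G → ℝ)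
    (hmono : ∀ S T : Finset G, S ⊆ T → v S ≤ v T)
    (hsub : ∀ S T : Finset G, ∀ g, S ⊆ T → g ∉ T →
      v (insert g T) - v T ≤ v (insert g S) - v S)
    (X : Finset G) (B : Finset G) :
    v (X ∪ B) ≤ v X + ∑ g ∈ B, (v (insert g X) - v X) := by
  induction B using Finset.induction_on with
  | empty => simp
  | @insert a B hg ih =>
    rw [Finset.sum_insert hg, Finset.union_insert]
    by_cases ha : a ∈ X ∪ B
    · rw [Finset.insert_eq_self.mpr ha]
      have : v X ≤ v (insert a X) := hmono _ _ (Finset.subset_insert _ _)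
      linarith
    · have := hsub X (X ∪ B) a Finset.subset_union_left ha
      linarith

/-- For a non-decreasing submodular `v` and `k`-element sets `X = {x_1,…,x_k}`,
`Y = {y_1,…,y_k}`: if `v(x_r | {x_1,…,x_{r−1}}) ≥ v(y_{r+1} | {x_1,…,x_{r−1}})` for every
`r ∈ [k−1]`, then `v X ≥ (1/2)·v (Y \ {y_1})`. -/
theorem submodular_half_bound_shifted {G : Type*} [DecidableEq G] (v : Finset G → ℝ)
    (hnn : ∀ S, 0 ≤ v S) (hz : v ∅ = 0)
    (hmono : ∀ S T : Finset G, S ⊆ T → v S ≤ v T)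
    (hsub : ∀ S T : Finset G, ∀ g, S ⊆ T → g ∉ T →
      v (insert g T) - v T ≤ v (insert g S) - v S)
    {k : ℕ} (hk : 0 < k) (x y : Fin k → G)
    (hx : Function.Injective x) (hy : Function.Injective y)
    (h : ∀ r : Fin k, ∀ hr : r.val + 1 < k,
      v (insert (x r) (prefixSet x r)) - v (prefixSet x r) ≥
        v (insert (y ⟨r.val + 1, hr⟩) (prefixSet x r)) - v (prefixSet x r)) :
    v (Finset.univ.image x) ≥
      (1 / 2) * v ((Finset.univ.image y).erase (y ⟨0, hk⟩)) := by
  set X : Finset G := Finset.univ.image x with hX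
  set Q : ℕ → Finset G := fun n => (Finset.univ.filter fun j : Fin k => j.val < n).image x
    with hQ
  have hQ0 : Q 0 = ∅ := by simp [hQ]
  have hQk : Q k = X := by
    simp only [hQ, hX]
    congr 1
    ext j
    simp [j.isLt]
  have hQmono : ∀ m n : ℕ, m ≤ n → Q m ⊆ Q n := by
    intro m n hmn
    apply Finset.image_subset_image
    intro j hj
    simp only [Finset.mem_filter] at hj ⊢
    exact ⟨hj.1, lt_of_lt_of_le hj.2 hmn⟩
  have hQsucc : ∀ n (hn : n < k), Q (n + 1) = insert (x ⟨n, hn⟩) (Q n) := by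
    intro n hn
    ext g
    simp only [hQ, Finset.mem_image, Finset.mem_filter, Finset.mem_univ, true_and,
      Finset.mem_insert]
    constructor
    · rintro ⟨j, hj, rfl⟩
      rcases Nat.lt_succ_iff_lt_or_eq.mp hj with hj' | hj'
      · exact Or.inr ⟨j, hj', rfl⟩
      · left; congr 1; exact Fin.ext hj'
    · rintro (rfl | ⟨j, hj, rfl⟩)
      · exact ⟨⟨n, hn⟩, Nat.lt_succ_self n, rfl⟩
      · exact ⟨j, Nat.lt_succ_of_lt hj, rfl⟩
  have hpre : ∀ r : Fin k, prefixSet x r = Q r.val := by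
    intro r
    ext g
    simp only [prefixSet, hQ, Finset.mem_image, Finset.mem_filter, Finset.mem_univ, true_and,
      Fin.lt_def]
  -- per-index bound
  set F : ℕ → ℝ := fun n => v (Q n) - v (Q (n - 1)) with hF
  have key : ∀ j : Fin k, j ≠ ⟨0, hk⟩ →
      v (insert (y j) X) - v X ≤ F j.val := by
    intro j hj0
    have hj1 : 1 ≤ j.val := by
      have : j.val ≠ 0 := fun h' => hj0 (Fin.ext h')
      omega
    have hrk : j.val - 1 < k := lt_of_le_of_lt (Nat.sub_le _ _) j.isLt
    set r : Fin k := ⟨j.val - 1, hrk⟩ with hr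
    have hr1 : r.val + 1 < k := by
      simp only [hr]
      omega
    have hstep1 : v (insert (y j) X) - v X ≤
        v (insert (y j) (Q (j.val - 1))) - v (Q (j.val - 1)) := by
      by_cases hmem : y j ∈ X
      · rw [Finset.insert_eq_self.mpr hmem]
        have : v (Q (j.val - 1)) ≤ v (insert (y j) (Q (j.val - 1))) :=
          hmono _ _ (Finset.subset_insert _ _)
        linarith
      · exact hsub _ _ _ (hQk ▸ hQmono _ _ (Nat.le_of_lt hrk)) hmem
    have hjr : (⟨r.val + 1, hr1⟩ : Fin k) = j := by
      apply Fin.ext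
      show j.val - 1 + 1 = j.val
      omega
    have hh := h r hr1
    rw [hjr, hpre r] at hh
    have hins : insert (x r) (Q r.val) = Q j.val := by
      have h2 := hQsucc r.val r.isLt
      have h3 : (⟨r.val, r.isLt⟩ : Fin k) = r := Fin.ext rfl
      rw [h3] at h2
      rw [← h2]
      congr 1
      show j.val - 1 + 1 = j.val
      omega
    rw [hins] at hh
    have : Q r.val = Q (j.val - 1) := by rw [hr]
    rw [this] at hh
    simp only [hF]
    linarith
  -- the erased set
  set Y' : Finset G := (Finset.univ.image y).erase (y ⟨0, hk⟩) with hY'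
  have hY'eq : Y' = (Finset.univ.erase (⟨0, hk⟩ : Fin k)).image y := by
    rw [hY', Finset.image_erase hy]
  have hsum1 : ∑ g ∈ Y', (v (insert g X) - v X) ≤ ∑ j ∈ Finset.univ.erase (⟨0, hk⟩ : Fin k), F j.val := by
    rw [hY'eq, Finset.sum_image (fun a _ b _ hab => hy hab)]
    apply Finset.sum_le_sum
    intro j hj
    exact key j (Finset.ne_of_mem_erase hj)
  have hF0 : F 0 = 0 := by simp [hF]
  have hsum2 : ∑ j ∈ Finset.univ.erase (⟨0, hk⟩ : Fin k), F j.val = ∑ n ∈ Finset.range k, F n := by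
    rw [Finset.sum_erase (f := fun j : Fin k => F j.val) Finset.univ hF0]
    exact Fin.sum_univ_eq_sum_range (fun n => F n) k
  have hk1 : k - 1 + 1 = k := by omega
  have hsum3 : ∑ n ∈ Finset.range k, F n = v (Q (k - 1)) := by
    rw [← hk1, Finset.sum_range_succ', hF0, add_zero]
    have : ∀ i ∈ Finset.range (k - 1), F (i + 1) = v (Q (i + 1)) - v (Q i) := by
      intro i _
      simp [hF]
    rw [Finset.sum_congr rfl this, Finset.sum_range_sub (fun n => v (Q n)), hQ0, hz, sub_zero,
      Nat.add_sub_cancel]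
  have hQle : v (Q (k - 1)) ≤ v X := hQk ▸ hmono _ _ (hQmono _ _ (Nat.sub_le _ _))
  have hub := union_bound_aux v hmono hsub X Y'
  have hmain : v Y' ≤ v (X ∪ Y') := hmono _ _ Finset.subset_union_right
  have : v Y' ≤ 2 * v X := by
    rw [hsum2, hsum3] at hsum1
    linarith
  linarith
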